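/- (Theorem 1-1, flow-level scheduling with release times and weight ratio R.) Assume the flow-level dual data with κ = 1/2 and a = 1, a real R ≥ 1, hypotheses (A), (B), (C) of Lemma 3, the relaxed tightness (D_R): w_k ≤ R·( α_k + Σ_{i∈I} Σ_{k'=k}^n βI(i,k')·LI(i,k) + Σ_{j∈J} Σ_{k'=k}^n βJ(j,k')·LJ(j,k) ) for every k, and the weak-duality bound (E): Σ_k α_k·r_k + Σ_{i∈I} Σ_k βI(i,k)·FI(i,k) + Σ_{j∈J} Σ_k βJ(j,k)·FJ(j,k) ≤ OPT. Then Σ_k w_k·C_k ≤ (4Rχ + R + 1 − 2/m)·OPT. -/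
import Mathlib


/-- Theorem 1-1 (flow-level scheduling with release times, weight ratio R): ratio 4Rχ + R + 1 − 2/m. -/
theorem flow_level_with_release_times_ratio
    -- flow-level dual data
    (n : ℕ) (hn : 1 ≤ n)
    (I J : Type*) [Fintype I] [Fintype J] [Nonempty I] [Nonempty J]
    (m χ : ℝ) (hm : 2 ≤ m) (hχ : 1 ≤ χ)
    (w r C Cstar α DI DJ : Fin n → ℝ)
    (βI LI FI : I → Fin n → ℝ) (βJ LJ FJ : J → Fin n → ℝ)
    (hw : ∀ k, 0 ≤ w k) (hr : ∀ k, 0 ≤ r k) (hC : ∀ k, 0 ≤ C k)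
    (hCstar : ∀ k, 0 ≤ Cstar k) (hα : ∀ k, 0 ≤ α k)
    (hβI : ∀ i k, 0 ≤ βI i k) (hβJ : ∀ j k, 0 ≤ βJ j k)
    (hLI : ∀ i k, 0 ≤ LI i k) (hLJ : ∀ j k, 0 ≤ LJ j k)
    (hDI : ∀ k, 0 ≤ DI k) (hDJ : ∀ k, 0 ≤ DJ k)
    (hFI : ∀ i k, 0 ≤ FI i k) (hFJ : ∀ j k, 0 ≤ FJ j k)
    (hDImono : Monotone DI) (hDJmono : Monotone DJ)
    (hcumI : ∀ i k, ∑ k' ∈ Finset.Iic k, LI i k' ≤ DI k)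
    (hcumJ : ∀ j k, ∑ k' ∈ Finset.Iic k, LJ j k' ≤ DJ k)
    (R : ℝ) (hR : 1 ≤ R)
    -- (A) with κ = 1/2
    (hA : ∀ k, 0 < α k →
      DI k ≤ 2 * m * r k ∧ DJ k ≤ 2 * m * r k ∧ ∀ k' ≤ k, r k' ≤ r k)
    -- (B) with κ = 1/2
    (hBI : ∀ i k', 0 < βI i k' →
      (∀ ℓ ≤ k', r ℓ ≤ DI k' / (2 * m)) ∧
      (∀ k ≤ k', DI k + DJ k ≤ 2 * DI k') ∧
      (DI k') ^ 2 ≤ 2 * m * FI i k')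
    (hBJ : ∀ j k', 0 < βJ j k' →
      (∀ ℓ ≤ k', r ℓ ≤ DJ k' / (2 * m)) ∧
      (∀ k ≤ k', DI k + DJ k ≤ 2 * DJ k') ∧
      (DJ k') ^ 2 ≤ 2 * m * FJ j k')
    -- (C) with a = 1
    (hCb : ∀ k, C k ≤ (Finset.Iic k).sup' Finset.nonempty_Iic r
        + χ * (DI k + DJ k) / m + (1 - 2 / m) * Cstar k)
    -- (D_R) relaxed tightness, Lemma 1-1
    (hDR : ∀ k, w k ≤ R * (α k
        + ∑ i, ∑ k' ∈ Finset.Ici k, βI i k' * LI i k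
        + ∑ j, ∑ k' ∈ Finset.Ici k, βJ j k' * LJ j k))
    -- (E) weak duality
    (hE : ∑ k, α k * r k + ∑ i, ∑ k, βI i k * FI i k + ∑ j, ∑ k, βJ j k * FJ j k
        ≤ ∑ k, w k * Cstar k) :
    ∑ k, w k * C k ≤ (4 * R * χ + R + 1 - 2 / m) * ∑ k, w k * Cstar k := by
  
  classical
  have hm0 : (0:ℝ) < m := by linarith
  have h2m : (0:ℝ) < 2 * m := by linarith
  have hχ0 : (0:ℝ) ≤ χ := by linarith
  have hc0 : (0:ℝ) ≤ 1 + 4 * χ := by linarith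
  set X : Fin n → ℝ := fun k =>
    (Finset.Iic k).sup' Finset.nonempty_Iic r + χ * (DI k + DJ k) / m with hXdef
  have hX0 : ∀ k, 0 ≤ X k := by
    intro k
    have h1 : r k ≤ (Finset.Iic k).sup' Finset.nonempty_Iic r :=
      Finset.le_sup' r (Finset.mem_Iic.mpr le_rfl)
    have h2 : 0 ≤ χ * (DI k + DJ k) / m := by
      apply div_nonneg _ hm0.le
      exact mul_nonneg hχ0 (by linarith [hDI k, hDJ k])
    have := hr k
    simp only [hXdef]
    linarith
  -- bound on α k * X k
  have hαX : ∀ k, α k * X k ≤ (1 + 4 * χ) * (α k * r k) := by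
    intro k
    rcases (hα k).eq_or_lt with h | h
    · rw [← h]; simp
    · obtain ⟨h1, h2, h3⟩ := hA k h
      have hsup : (Finset.Iic k).sup' Finset.nonempty_Iic r ≤ r k :=
        Finset.sup'_le _ _ fun k' hk' => h3 k' (Finset.mem_Iic.mp hk')
      have hdiv : χ * (DI k + DJ k) / m ≤ 4 * χ * r k := by
        rw [div_le_iff₀ hm0]
        nlinarith [hr k]
      have hXle : X k ≤ (1 + 4 * χ) * r k := by
        simp only [hXdef]; linarith
      calc α k * X k ≤ α k * ((1 + 4*χ) * r k) :=
            mul_le_mul_of_nonneg_left hXle h.le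
        _ = (1 + 4*χ) * (α k * r k) := by ring
  -- bound for βI
  have hβIX : ∀ i k', βI i k' * (∑ k ∈ Finset.Iic k', LI i k * X k)
      ≤ (1 + 4*χ) * (βI i k' * FI i k') := by
    intro i k'
    rcases (hβI i k').eq_or_lt with h | h
    · rw [← h]; simp
    · obtain ⟨h1, h2, h3⟩ := hBI i k' h
      set c : ℝ := (1 + 4*χ) * DI k' / (2*m) with hc
      have hc' : 0 ≤ c := by
        rw [hc]; exact div_nonneg (mul_nonneg hc0 (hDI k')) h2m.le
      have hXc : ∀ k ∈ Finset.Iic k', X k ≤ c := by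
        intro k hk
        have hkk' : k ≤ k' := Finset.mem_Iic.mp hk
        have hs : (Finset.Iic k).sup' Finset.nonempty_Iic r ≤ DI k' / (2*m) :=
          Finset.sup'_le _ _ fun ℓ hℓ => h1 ℓ (le_trans (Finset.mem_Iic.mp hℓ) hkk')
        have hd : χ * (DI k + DJ k) ≤ χ * (2 * DI k') :=
          mul_le_mul_of_nonneg_left (h2 k hkk') hχ0
        have hd2 : χ * (DI k + DJ k) / m ≤ χ * (2 * DI k') / m :=
          (div_le_div_iff_of_pos_right hm0).mpr hd
        have hce : DI k' / (2*m) + χ * (2 * DI k') / m = c := by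
          rw [hc]; field_simp; ring
        simp only [hXdef]
        linarith
      have hsum : ∑ k ∈ Finset.Iic k', LI i k * X k ≤ DI k' * c := by
        calc ∑ k ∈ Finset.Iic k', LI i k * X k
            ≤ ∑ k ∈ Finset.Iic k', LI i k * c :=
              Finset.sum_le_sum fun k hk => mul_le_mul_of_nonneg_left (hXc k hk) (hLI i k)
          _ = (∑ k ∈ Finset.Iic k', LI i k) * c := by rw [← Finset.sum_mul]
          _ ≤ DI k' * c := mul_le_mul_of_nonneg_right (hcumI i k') hc'
      have hfin : DI k' * c ≤ (1 + 4*χ) * FI i k' := by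
        rw [hc, show DI k' * ((1+4*χ) * DI k' / (2*m)) = ((1+4*χ) * DI k'^2) / (2*m) by ring,
          div_le_iff₀ h2m]
        nlinarith [hFI i k']
      calc βI i k' * (∑ k ∈ Finset.Iic k', LI i k * X k)
          ≤ βI i k' * ((1+4*χ) * FI i k') :=
            mul_le_mul_of_nonneg_left (hsum.trans hfin) h.le
        _ = (1+4*χ) * (βI i k' * FI i k') := by ring
  -- bound for βJ
  have hβJX : ∀ j k', βJ j k' * (∑ k ∈ Finset.Iic k', LJ j k * X k)
      ≤ (1 + 4*χ) * (βJ j k' * FJ j k') := by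
    intro j k'
    rcases (hβJ j k').eq_or_lt with h | h
    · rw [← h]; simp
    · obtain ⟨h1, h2, h3⟩ := hBJ j k' h
      set c : ℝ := (1 + 4*χ) * DJ k' / (2*m) with hc
      have hc' : 0 ≤ c := by
        rw [hc]; exact div_nonneg (mul_nonneg hc0 (hDJ k')) h2m.le
      have hXc : ∀ k ∈ Finset.Iic k', X k ≤ c := by
        intro k hk
        have hkk' : k ≤ k' := Finset.mem_Iic.mp hk
        have hs : (Finset.Iic k).sup' Finset.nonempty_Iic r ≤ DJ k' / (2*m) :=
          Finset.sup'_le _ _ fun ℓ hℓ => h1 ℓ (le_trans (Finset.mem_Iic.mp hℓ) hkk')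
        have hd : χ * (DI k + DJ k) ≤ χ * (2 * DJ k') :=
          mul_le_mul_of_nonneg_left (h2 k hkk') hχ0
        have hd2 : χ * (DI k + DJ k) / m ≤ χ * (2 * DJ k') / m :=
          (div_le_div_iff_of_pos_right hm0).mpr hd
        have hce : DJ k' / (2*m) + χ * (2 * DJ k') / m = c := by
          rw [hc]; field_simp; ring
        simp only [hXdef]
        linarith
      have hsum : ∑ k ∈ Finset.Iic k', LJ j k * X k ≤ DJ k' * c := by
        calc ∑ k ∈ Finset.Iic k', LJ j k * X k
            ≤ ∑ k ∈ Finset.Iic k', LJ j k * c :=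
              Finset.sum_le_sum fun k hk => mul_le_mul_of_nonneg_left (hXc k hk) (hLJ j k)
          _ = (∑ k ∈ Finset.Iic k', LJ j k) * c := by rw [← Finset.sum_mul]
          _ ≤ DJ k' * c := mul_le_mul_of_nonneg_right (hcumJ j k') hc'
      have hfin : DJ k' * c ≤ (1 + 4*χ) * FJ j k' := by
        rw [hc, show DJ k' * ((1+4*χ) * DJ k' / (2*m)) = ((1+4*χ) * DJ k'^2) / (2*m) by ring,
          div_le_iff₀ h2m]
        nlinarith [hFJ j k']
      calc βJ j k' * (∑ k ∈ Finset.Iic k', LJ j k * X k)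
          ≤ βJ j k' * ((1+4*χ) * FJ j k') :=
            mul_le_mul_of_nonneg_left (hsum.trans hfin) h.le
        _ = (1+4*χ) * (βJ j k' * FJ j k') := by ring
  -- swap lemma
  have swap : ∀ f : Fin n → Fin n → ℝ,
      ∑ k, ∑ k' ∈ Finset.Ici k, f k k' = ∑ k' : Fin n, ∑ k ∈ Finset.Iic k', f k k' := by
    intro f
    calc ∑ k, ∑ k' ∈ Finset.Ici k, f k k'
        = ∑ k, ∑ k' : Fin n, if k ≤ k' then f k k' else 0 := by
          refine Finset.sum_congr rfl fun k _ => ?_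
          rw [← Finset.sum_filter]
          congr 1
          ext k'
          simp
      _ = ∑ k' : Fin n, ∑ k : Fin n, if k ≤ k' then f k k' else 0 := Finset.sum_comm
      _ = ∑ k' : Fin n, ∑ k ∈ Finset.Iic k', f k k' := by
          refine Finset.sum_congr rfl fun k' _ => ?_
          rw [← Finset.sum_filter]
          congr 1
          ext k
          simp
  -- step 1: apply (C)
  have step1 : ∑ k, w k * C k ≤ ∑ k, w k * X k + (1 - 2/m) * ∑ k, w k * Cstar k := by
    have h1 : ∀ k ∈ Finset.univ, w k * C k ≤ w k * X k + (1 - 2/m) * (w k * Cstar k) := by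
      intro k _
      have h2 := hCb k
      have h3 : C k ≤ X k + (1 - 2/m) * Cstar k := by simp only [hXdef]; linarith
      nlinarith [hw k]
    calc ∑ k, w k * C k ≤ ∑ k, (w k * X k + (1 - 2/m) * (w k * Cstar k)) :=
          Finset.sum_le_sum h1
      _ = ∑ k, w k * X k + (1 - 2/m) * ∑ k, w k * Cstar k := by
          rw [Finset.sum_add_distrib, Finset.mul_sum]
  -- step 2: bound ∑ w X
  have step2 : ∑ k, w k * X k ≤ R * (1 + 4*χ) * ∑ k, w k * Cstar k := by
    have hwX : ∑ k, w k * X k ≤ ∑ k, R * (α k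
        + ∑ i, ∑ k' ∈ Finset.Ici k, βI i k' * LI i k
        + ∑ j, ∑ k' ∈ Finset.Ici k, βJ j k' * LJ j k) * X k :=
      Finset.sum_le_sum fun k _ => mul_le_mul_of_nonneg_right (hDR k) (hX0 k)
    have hsplit : ∑ k, R * (α k
        + ∑ i, ∑ k' ∈ Finset.Ici k, βI i k' * LI i k
        + ∑ j, ∑ k' ∈ Finset.Ici k, βJ j k' * LJ j k) * X k
        = R * (∑ k, α k * X k)
        + R * (∑ k, (∑ i, ∑ k' ∈ Finset.Ici k, βI i k' * LI i k) * X k)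
        + R * (∑ k, (∑ j, ∑ k' ∈ Finset.Ici k, βJ j k' * LJ j k) * X k) := by
      rw [Finset.mul_sum, Finset.mul_sum, Finset.mul_sum, ← Finset.sum_add_distrib,
        ← Finset.sum_add_distrib]
      exact Finset.sum_congr rfl fun k _ => by ring
    -- α part
    have hα' : ∑ k, α k * X k ≤ (1 + 4*χ) * ∑ k, α k * r k := by
      rw [Finset.mul_sum]; exact Finset.sum_le_sum fun k _ => hαX k
    -- βI part
    have hIrw : ∑ k, (∑ i, ∑ k' ∈ Finset.Ici k, βI i k' * LI i k) * X k
        = ∑ i, ∑ k', βI i k' * (∑ k ∈ Finset.Iic k', LI i k * X k) := by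
      have e1 : ∀ k, (∑ i, ∑ k' ∈ Finset.Ici k, βI i k' * LI i k) * X k
          = ∑ i, ∑ k' ∈ Finset.Ici k, βI i k' * (LI i k * X k) := by
        intro k
        rw [Finset.sum_mul]
        exact Finset.sum_congr rfl fun i _ => by
          rw [Finset.sum_mul]; exact Finset.sum_congr rfl fun k' _ => by ring
      calc ∑ k, (∑ i, ∑ k' ∈ Finset.Ici k, βI i k' * LI i k) * X k
          = ∑ k, ∑ i, ∑ k' ∈ Finset.Ici k, βI i k' * (LI i k * X k) :=
            Finset.sum_congr rfl fun k _ => e1 k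
        _ = ∑ i, ∑ k, ∑ k' ∈ Finset.Ici k, βI i k' * (LI i k * X k) := Finset.sum_comm
        _ = ∑ i, ∑ k', ∑ k ∈ Finset.Iic k', βI i k' * (LI i k * X k) :=
            Finset.sum_congr rfl fun i _ => swap _
        _ = ∑ i, ∑ k', βI i k' * (∑ k ∈ Finset.Iic k', LI i k * X k) := by
            exact Finset.sum_congr rfl fun i _ => Finset.sum_congr rfl fun k' _ => by
              rw [Finset.mul_sum]
    have hI' : ∑ k, (∑ i, ∑ k' ∈ Finset.Ici k, βI i k' * LI i k) * X k
        ≤ (1 + 4*χ) * ∑ i, ∑ k', βI i k' * FI i k' := by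
      rw [hIrw, Finset.mul_sum]
      refine Finset.sum_le_sum fun i _ => ?_
      rw [Finset.mul_sum]
      exact Finset.sum_le_sum fun k' _ => hβIX i k'
    have hJrw : ∑ k, (∑ j, ∑ k' ∈ Finset.Ici k, βJ j k' * LJ j k) * X k
        = ∑ j, ∑ k', βJ j k' * (∑ k ∈ Finset.Iic k', LJ j k * X k) := by
      have e1 : ∀ k, (∑ j, ∑ k' ∈ Finset.Ici k, βJ j k' * LJ j k) * X k
          = ∑ j, ∑ k' ∈ Finset.Ici k, βJ j k' * (LJ j k * X k) := by
        intro k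
        rw [Finset.sum_mul]
        exact Finset.sum_congr rfl fun j _ => by
          rw [Finset.sum_mul]; exact Finset.sum_congr rfl fun k' _ => by ring
      calc ∑ k, (∑ j, ∑ k' ∈ Finset.Ici k, βJ j k' * LJ j k) * X k
          = ∑ k, ∑ j, ∑ k' ∈ Finset.Ici k, βJ j k' * (LJ j k * X k) :=
            Finset.sum_congr rfl fun k _ => e1 k
        _ = ∑ j, ∑ k, ∑ k' ∈ Finset.Ici k, βJ j k' * (LJ j k * X k) := Finset.sum_comm
        _ = ∑ j, ∑ k', ∑ k ∈ Finset.Iic k', βJ j k' * (LJ j k * X k) :=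
            Finset.sum_congr rfl fun j _ => swap _
        _ = ∑ j, ∑ k', βJ j k' * (∑ k ∈ Finset.Iic k', LJ j k * X k) := by
            exact Finset.sum_congr rfl fun j _ => Finset.sum_congr rfl fun k' _ => by
              rw [Finset.mul_sum]
    have hJ' : ∑ k, (∑ j, ∑ k' ∈ Finset.Ici k, βJ j k' * LJ j k) * X k
        ≤ (1 + 4*χ) * ∑ j, ∑ k', βJ j k' * FJ j k' := by
      rw [hJrw, Finset.mul_sum]
      refine Finset.sum_le_sum fun j _ => ?_
      rw [Finset.mul_sum]
      exact Finset.sum_le_sum fun k' _ => hβJX j k'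
    have hR0 : (0:ℝ) ≤ R := by linarith
    have hfinal : R * (1 + 4*χ) * (∑ k, α k * r k + ∑ i, ∑ k, βI i k * FI i k
        + ∑ j, ∑ k, βJ j k * FJ j k) ≤ R * (1 + 4*χ) * ∑ k, w k * Cstar k :=
      mul_le_mul_of_nonneg_left hE (mul_nonneg hR0 hc0)
    calc ∑ k, w k * X k
        ≤ R * (∑ k, α k * X k)
          + R * (∑ k, (∑ i, ∑ k' ∈ Finset.Ici k, βI i k' * LI i k) * X k)
          + R * (∑ k, (∑ j, ∑ k' ∈ Finset.Ici k, βJ j k' * LJ j k) * X k) := by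
          rw [← hsplit]; exact hwX
      _ ≤ R * ((1 + 4*χ) * ∑ k, α k * r k)
          + R * ((1 + 4*χ) * ∑ i, ∑ k', βI i k' * FI i k')
          + R * ((1 + 4*χ) * ∑ j, ∑ k', βJ j k' * FJ j k') := by
          gcongr
      _ = R * (1 + 4*χ) * (∑ k, α k * r k + ∑ i, ∑ k, βI i k * FI i k
          + ∑ j, ∑ k, βJ j k * FJ j k) := by ring
      _ ≤ R * (1 + 4*χ) * ∑ k, w k * Cstar k := hfinal
  have hfin : (4 * R * χ + R + 1 - 2 / m) * ∑ k, w k * Cstar k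
      = R * (1 + 4*χ) * ∑ k, w k * Cstar k + (1 - 2/m) * ∑ k, w k * Cstar k := by ring
  linarith
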